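/- Let (D,⊢,⊣,∘) be a di-skew brace and let (D,▷) = Conj(D,⊢,⊣) be its conjugation rack. Then the map a ↦ λ_a, where λ_a(b) = a^{-1} ⊢ a ∘ b, is a twist of (D,▷): each λ_a is a bijective shelf endomorphism of (D,▷) and λ_a λ_b = λ_{λ_a(b)} λ_{λ_{λ_a(b)}^{-1}(λ_a(b) ▷ a)} for all a, b ∈ D. -/
import Mathlib


/-- An element `e` is a *bar-unit* for the pair of operations `(⊢, ⊣)` if
`e ⊢ a = a = a ⊣ e` for all `a`. -/
def IsBarUnit {D : Type*} (vd dv : D → D → D) (e : D) : Prop :=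
  ∀ a : D, vd e a = a ∧ dv a e = a

/-- A generalized digroup (g-digroup): two associative operations `vd` (`⊢`) and `dv` (`⊣`)
satisfying inner associativity and the two bar-side irrelevance laws, admitting at least one
bar-unit, and such that for every element `a` and every bar-unit `e` there is a unique pair
`(I e a, J e a)` with `(I e a) ⊣ a = e = a ⊢ (J e a)`. -/
structure GDigroup (D : Type*) where
  vd : D → D → D
  dv : D → D → D
  vd_assoc : ∀ a b c : D, vd (vd a b) c = vd a (vd b c)
  dv_assoc : ∀ a b c : D, dv (dv a b) c = dv a (dv b c)
  inner_assoc : ∀ a b c : D, dv (vd a b) c = vd a (dv b c)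
  bar_right : ∀ a b c : D, dv a (vd b c) = dv a (dv b c)
  bar_left : ∀ a b c : D, vd (vd a b) c = vd (dv a b) c
  exists_barUnit : ∃ e : D, IsBarUnit vd dv e
  I : D → D → D
  J : D → D → D
  I_spec : ∀ e a : D, IsBarUnit vd dv e → dv (I e a) a = e
  J_spec : ∀ e a : D, IsBarUnit vd dv e → vd a (J e a) = e
  I_unique : ∀ e a x : D, IsBarUnit vd dv e → dv x a = e → x = I e a
  J_unique : ∀ e a y : D, IsBarUnit vd dv e → vd a y = e → y = J e a
/-- A (left) di-skew brace: the additive structure `(D, ⊢, ⊣)` is a g-digroup, the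
multiplicative structure `(D, ∘)` is a right group (an associative operation such that for
all `a b` there is a unique `x` with `a ∘ x = b`), and the compatibility laws
`a ∘ (b ⊢ c) = a ∘ b ⊢ a⁻¹ ⊢ a ∘ c`, `a ∘ (b ⊣ c) = a ∘ b ⊣ a⁻¹ ⊣ a ∘ c` and
`(a ⊢ b) ∘ c = (a ⊣ b) ∘ c` hold, where `a⁻¹ ⊢ x` means `(I e a) ⊢ x` and `x ⊣ a⁻¹` means
`x ⊣ (J e a)` for any bar-unit `e`. -/
structure DiSkewBrace (D : Type*) extends GDigroup D where
  circ : D → D → D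
  circ_assoc : ∀ a b c : D, circ (circ a b) c = circ a (circ b c)
  circ_rightGroup : ∀ a b : D, ∃! x : D, circ a x = b
  d1 : ∀ e : D, IsBarUnit vd dv e →
    ∀ a b c : D, circ a (vd b c) = vd (circ a b) (vd (I e a) (circ a c))
  d2 : ∀ e : D, IsBarUnit vd dv e →
    ∀ a b c : D, circ a (dv b c) = dv (dv (circ a b) (J e a)) (circ a c)
  d3 : ∀ a b c : D, circ (vd a b) c = circ (dv a b) c


section Aux

variable {D : Type*} (S : DiSkewBrace D) (e : D) (he : IsBarUnit S.vd S.dv e)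

include he

lemma dsb_I_eq (a : D) : S.I e a = S.dv e (S.J e a) := by
  calc S.I e a = S.dv (S.I e a) e := ((he (S.I e a)).2).symm
    _ = S.dv (S.I e a) (S.vd a (S.J e a)) := by rw [S.J_spec e a he]
    _ = S.dv (S.I e a) (S.dv a (S.J e a)) := S.bar_right _ _ _
    _ = S.dv (S.dv (S.I e a) a) (S.J e a) := (S.dv_assoc _ _ _).symm
    _ = S.dv e (S.J e a) := by rw [S.I_spec e a he]

lemma dsb_IJ_vd (a x : D) : S.vd (S.I e a) x = S.vd (S.J e a) x := by
  rw [dsb_I_eq S e he a, ← S.bar_left, S.vd_assoc, (he (S.vd (S.J e a) x)).1]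

lemma dsb_IJ_dv (a x : D) : S.dv x (S.I e a) = S.dv x (S.J e a) := by
  rw [dsb_I_eq S e he a, ← S.bar_right, (he (S.J e a)).1]

lemma dsb_vdI (a x : D) : S.vd a (S.vd (S.I e a) x) = x := by
  rw [dsb_IJ_vd S e he, ← S.vd_assoc, S.J_spec e a he, (he x).1]

lemma dsb_vdIa (a x : D) : S.vd (S.vd (S.I e a) a) x = x := by
  rw [S.bar_left, S.I_spec e a he, (he x).1]

lemma dsb_dvI (a x : D) : S.dv (S.dv x a) (S.I e a) = x := by
  rw [dsb_IJ_dv S e he, S.dv_assoc, ← S.bar_right, S.J_spec e a he, (he x).2]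

lemma dsb_dvI' (a x : D) : S.dv (S.dv x (S.I e a)) a = x := by
  rw [S.dv_assoc, S.I_spec e a he, (he x).2]

/-- Key lemma: if `s ⊣ w` is a bar-unit, then left `⊢`-action of `s` agrees with that of
`I e w`. -/
lemma dsb_key (w s u : D) (hu : IsBarUnit S.vd S.dv u) (hsw : S.dv s w = u) (x : D) :
    S.vd s x = S.vd (S.I e w) x := by
  have hs : s = S.dv u (S.J e w) := by
    calc s = S.dv s e := ((he s).2).symm
      _ = S.dv s (S.vd w (S.J e w)) := by rw [S.J_spec e w he]
      _ = S.dv s (S.dv w (S.J e w)) := S.bar_right _ _ _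
      _ = S.dv (S.dv s w) (S.J e w) := (S.dv_assoc _ _ _).symm
      _ = S.dv u (S.J e w) := by rw [hsw]
  rw [hs, ← S.bar_left, S.vd_assoc, (hu (S.vd (S.J e w) x)).1, ← dsb_IJ_vd S e he]

variable (lam : D → D → D) (hlam : ∀ a b : D, lam a b = S.vd (S.I e a) (S.circ a b))

include hlam

lemma dsb_lam_vd (a b c : D) : lam a (S.vd b c) = S.vd (lam a b) (lam a c) := by
  rw [hlam a (S.vd b c), hlam a b, hlam a c, S.d1 e he, ← S.vd_assoc]

lemma dsb_lam_dv (a b c : D) : lam a (S.dv b c) = S.dv (lam a b) (lam a c) := by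
  rw [hlam a (S.dv b c), hlam a b, hlam a c, S.d2 e he, ← S.inner_assoc, ← S.inner_assoc,
    ← dsb_IJ_dv S e he, S.dv_assoc, ← S.bar_right]

variable (laminv : D → D → D)
  (hlaminv : ∀ a b : D, laminv a (lam a b) = b ∧ lam a (laminv a b) = b)

include hlaminv

lemma dsb_lam_e (a : D) : IsBarUnit S.vd S.dv (lam a e) := by
  intro x
  constructor
  · have h0 : ∀ c : D, lam a c = S.vd (lam a e) (lam a c) := by
      intro c
      have h1 : S.circ a c = S.vd (S.circ a e) (lam a c) := by
        conv_lhs => rw [← (he c).1]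
        rw [S.d1 e he, ← hlam a c]
      calc lam a c = S.vd (S.I e a) (S.circ a c) := hlam a c
        _ = S.vd (S.I e a) (S.vd (S.circ a e) (lam a c)) := by rw [← h1]
        _ = S.vd (S.vd (S.I e a) (S.circ a e)) (lam a c) := (S.vd_assoc _ _ _).symm
        _ = S.vd (lam a e) (lam a c) := by rw [← hlam a e]
    calc S.vd (lam a e) x = S.vd (lam a e) (lam a (laminv a x)) := by rw [(hlaminv a x).2]
      _ = lam a (laminv a x) := (h0 _).symm
      _ = x := (hlaminv a x).2
  · obtain ⟨c, hc, -⟩ := S.circ_rightGroup a x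
    have h1 : S.circ a c = S.dv (S.circ a c) (lam a e) := by
      calc S.circ a c = S.circ a (S.dv c e) := by rw [(he c).2]
        _ = S.dv (S.dv (S.circ a c) (S.J e a)) (S.circ a e) := S.d2 e he a c e
        _ = S.dv (S.dv (S.circ a c) (S.I e a)) (S.circ a e) := by rw [← dsb_IJ_dv S e he]
        _ = S.dv (S.circ a c) (S.dv (S.I e a) (S.circ a e)) := S.dv_assoc _ _ _
        _ = S.dv (S.circ a c) (S.vd (S.I e a) (S.circ a e)) := (S.bar_right _ _ _).symm
        _ = S.dv (S.circ a c) (lam a e) := by rw [← hlam a e]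
    rw [← hc, ← h1]

lemma dsb_lamI_action (a b x : D) :
    S.vd (lam a (S.I e b)) x = S.vd (S.I e (lam a b)) x := by
  refine dsb_key S e he (lam a b) _ (lam a e)
    (dsb_lam_e S e he lam hlam laminv hlaminv a) ?_ x
  rw [← dsb_lam_dv S e he lam hlam, S.I_spec e b he]

end Aux

/-- Let `(D, ⊢, ⊣, ∘)` be a di-skew brace, `e` a bar-unit, and let
`(D, ▷) = Conj(D, ⊢, ⊣)` be its conjugation rack, `a ▷ b = a⁻¹ ⊢ b ⊣ a = ((I e a) ⊢ b) ⊣ a`.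
Then the map `a ↦ λ_a`, with `λ_a(b) = a⁻¹ ⊢ a ∘ b`, is a twist of `(D, ▷)`: each `λ_a` is
a bijective shelf endomorphism of `(D, ▷)` and
`λ_a λ_b = λ_{λ_a(b)} λ_{λ_{λ_a(b)}⁻¹(λ_a(b) ▷ a)}` for all `a b`. -/
theorem diSkewBrace_lambda_is_twist {D : Type*} (S : DiSkewBrace D)
    (e : D) (he : IsBarUnit S.vd S.dv e)
    (tri : D → D → D) (htri : ∀ a b : D, tri a b = S.dv (S.vd (S.I e a) b) a)
    (lam : D → D → D) (hlam : ∀ a b : D, lam a b = S.vd (S.I e a) (S.circ a b))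
    (laminv : D → D → D)
    (hlaminv : ∀ a b : D, laminv a (lam a b) = b ∧ lam a (laminv a b) = b) :
    (∀ a : D, Function.Bijective (lam a)) ∧
    (∀ a b c : D, lam a (tri b c) = tri (lam a b) (lam a c)) ∧
    (∀ a b c : D,
      lam a (lam b c) = lam (lam a b) (lam (laminv (lam a b) (tri (lam a b) a)) c)) := by
  refine ⟨?_, ?_, ?_⟩
  · intro a
    exact Function.bijective_iff_has_inverse.mpr
      ⟨laminv a, fun x => (hlaminv a x).1, fun x => (hlaminv a x).2⟩
  · intro a b c
    rw [htri, htri, dsb_lam_dv S e he lam hlam, dsb_lam_vd S e he lam hlam,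
      dsb_lamI_action S e he lam hlam laminv hlaminv]
  · intro a b c
    have lamcomp : ∀ p q r : D, lam p (lam q r)
        = S.vd (lam p (S.I e q)) (S.vd (S.I e p) (S.circ (S.circ p q) r)) := by
      intro p q r
      rw [hlam q r, dsb_lam_vd S e he lam hlam, hlam p (S.circ q r), ← S.circ_assoc]
    set w := lam a b with hwdef
    set t := tri w a with htdef
    set d := laminv w t with hddef
    have hIw : ∀ x : D, S.vd (lam a (S.I e b)) x = S.vd (S.I e w) x := by
      intro x
      rw [hwdef]
      exact dsb_lamI_action S e he lam hlam laminv hlaminv a b x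
    have hld : lam w d = t := by
      rw [hddef]; exact (hlaminv w t).2
    have h1 : S.vd w (lam w d) = S.circ w d := by
      rw [hlam w d]; exact dsb_vdI S e he w (S.circ w d)
    have hcircwd : S.circ w d = S.dv a w := by
      calc S.circ w d = S.vd w (lam w d) := h1.symm
        _ = S.vd w t := by rw [hld]
        _ = S.vd w (S.dv (S.vd (S.I e w) a) w) := by rw [htdef, htri w a]
        _ = S.dv (S.vd w (S.vd (S.I e w) a)) w := (S.inner_assoc _ _ _).symm
        _ = S.dv a w := by rw [dsb_vdI S e he w a]
    have hY : S.circ (S.circ w d) c = S.circ (S.circ a b) c := by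
      calc S.circ (S.circ w d) c = S.circ (S.dv a w) c := by rw [hcircwd]
        _ = S.circ (S.vd a w) c := (S.d3 a w c).symm
        _ = S.circ (S.circ a b) c := by
            rw [hwdef, hlam a b, dsb_vdI S e he a (S.circ a b)]
    have hId : ∀ x : D, S.vd (lam w (S.I e d)) x = S.vd (S.I e t) x := by
      intro x
      have h2 : S.dv (lam w (S.I e d)) t = lam w e := by
        rw [← hld, ← dsb_lam_dv S e he lam hlam, S.I_spec e d he]
      exact dsb_key S e he t _ (lam w e)
        (dsb_lam_e S e he lam hlam laminv hlaminv w) h2 x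
    have hv : IsBarUnit S.vd S.dv (S.vd (S.I e w) (S.dv e w)) := by
      intro x
      constructor
      · calc S.vd (S.vd (S.I e w) (S.dv e w)) x
            = S.vd (S.dv (S.vd (S.I e w) e) w) x := by rw [S.inner_assoc]
          _ = S.vd (S.vd (S.vd (S.I e w) e) w) x := by rw [← S.bar_left]
          _ = S.vd (S.vd (S.I e w) (S.vd e w)) x := by rw [S.vd_assoc (S.I e w) e w]
          _ = S.vd (S.vd (S.I e w) w) x := by rw [(he w).1]
          _ = x := dsb_vdIa S e he w x
      · calc S.dv x (S.vd (S.I e w) (S.dv e w))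
            = S.dv x (S.dv (S.I e w) (S.dv e w)) := S.bar_right _ _ _
          _ = S.dv (S.dv x (S.I e w)) (S.dv e w) := (S.dv_assoc _ _ _).symm
          _ = S.dv (S.dv (S.dv x (S.I e w)) e) w := (S.dv_assoc _ _ _).symm
          _ = S.dv (S.dv x (S.I e w)) w := by rw [(he (S.dv x (S.I e w))).2]
          _ = x := dsb_dvI' S e he w x
    have hdwt : S.dv w t = S.dv (S.dv w (S.I e w)) (S.vd a w) := by
      calc S.dv w t = S.dv w (S.dv (S.vd (S.I e w) a) w) := by rw [htdef, htri w a]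
        _ = S.dv w (S.vd (S.vd (S.I e w) a) w) := (S.bar_right _ _ _).symm
        _ = S.dv w (S.vd (S.I e w) (S.vd a w)) := by rw [S.vd_assoc (S.I e w) a w]
        _ = S.dv w (S.dv (S.I e w) (S.vd a w)) := S.bar_right _ _ _
        _ = S.dv (S.dv w (S.I e w)) (S.vd a w) := (S.dv_assoc _ _ _).symm
    have hst : S.dv (S.vd (S.I e w) (S.dv (S.I e a) w)) t = S.vd (S.I e w) (S.dv e w) := by
      calc S.dv (S.vd (S.I e w) (S.dv (S.I e a) w)) t
          = S.vd (S.I e w) (S.dv (S.dv (S.I e a) w) t) := S.inner_assoc _ _ _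
        _ = S.vd (S.I e w) (S.dv (S.I e a) (S.dv w t)) := by
            rw [S.dv_assoc (S.I e a) w t]
        _ = S.vd (S.I e w) (S.dv (S.I e a) (S.dv (S.dv w (S.I e w)) (S.vd a w))) := by
            rw [hdwt]
        _ = S.vd (S.I e w) (S.dv (S.dv (S.I e a) (S.dv w (S.I e w))) (S.vd a w)) := by
            rw [← S.dv_assoc (S.I e a) (S.dv w (S.I e w)) (S.vd a w)]
        _ = S.vd (S.I e w) (S.dv (S.dv (S.dv (S.I e a) w) (S.I e w)) (S.vd a w)) := by
            rw [← S.dv_assoc (S.I e a) w (S.I e w)]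
        _ = S.vd (S.I e w) (S.dv (S.I e a) (S.vd a w)) := by
            rw [dsb_dvI S e he w (S.I e a)]
        _ = S.vd (S.I e w) (S.dv (S.I e a) (S.dv a w)) := by rw [S.bar_right (S.I e a) a w]
        _ = S.vd (S.I e w) (S.dv (S.dv (S.I e a) a) w) := by rw [← S.dv_assoc (S.I e a) a w]
        _ = S.vd (S.I e w) (S.dv e w) := by rw [S.I_spec e a he]
    have hs_action : ∀ x : D,
        S.vd (S.I e t) x = S.vd (S.vd (S.I e w) (S.dv (S.I e a) w)) x :=
      fun x => (dsb_key S e he t _ _ hv hst x).symm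
    have hLHS : lam a (lam b c)
        = S.vd (S.vd (S.I e w) (S.I e a)) (S.circ (S.circ a b) c) := by
      calc lam a (lam b c)
          = S.vd (lam a (S.I e b)) (S.vd (S.I e a) (S.circ (S.circ a b) c)) := lamcomp a b c
        _ = S.vd (S.I e w) (S.vd (S.I e a) (S.circ (S.circ a b) c)) := by rw [hIw]
        _ = S.vd (S.vd (S.I e w) (S.I e a)) (S.circ (S.circ a b) c) := (S.vd_assoc _ _ _).symm
    have hRHS : lam w (lam d c)
        = S.vd (S.vd (S.I e w) (S.I e a)) (S.circ (S.circ a b) c) := by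
      calc lam w (lam d c)
          = S.vd (lam w (S.I e d)) (S.vd (S.I e w) (S.circ (S.circ w d) c)) := lamcomp w d c
        _ = S.vd (S.I e t) (S.vd (S.I e w) (S.circ (S.circ a b) c)) := by rw [hId, hY]
        _ = S.vd (S.vd (S.I e w) (S.dv (S.I e a) w))
              (S.vd (S.I e w) (S.circ (S.circ a b) c)) := by rw [hs_action]
        _ = S.vd (S.dv (S.vd (S.I e w) (S.I e a)) w)
              (S.vd (S.I e w) (S.circ (S.circ a b) c)) := by
            rw [← S.inner_assoc (S.I e w) (S.I e a) w]
        _ = S.vd (S.vd (S.vd (S.I e w) (S.I e a)) w)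
              (S.vd (S.I e w) (S.circ (S.circ a b) c)) := by
            rw [← S.bar_left (S.vd (S.I e w) (S.I e a)) w]
        _ = S.vd (S.vd (S.I e w) (S.I e a))
              (S.vd w (S.vd (S.I e w) (S.circ (S.circ a b) c))) := by
            rw [S.vd_assoc (S.vd (S.I e w) (S.I e a)) w]
        _ = S.vd (S.vd (S.I e w) (S.I e a)) (S.circ (S.circ a b) c) := by
            rw [dsb_vdI S e he w (S.circ (S.circ a b) c)]
    exact hLHS.trans hRHS.symm
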